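/- Let G be a bipartite graph with parts X,Y, τ a threshold assignment, and S_0,…,S_k a timed target set. Define S_e=S_0∪S_2∪… and S_o=S_1∪S_3∪…. If D⊆V satisfies D∩S_e∩X=∅ and D∩S_o∩Y=∅, then the number of edges of the induced subgraph G[D] satisfies |E(G[D])| ≤ Σ_{u∈D}(d(u)−τ(u)). -/
import Mathlib


open Finset
open scoped Classical

variable {V : Type*}

noncomputable def Qseq (G : SimpleGraph V) [Fintype V] (τ : V → ℕ) (S : ℕ → Finset V) :
    ℕ → Finset V
  | 0 => ∅
  | i + 1 => Finset.univ.filter fun v =>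
      τ v ≤ (G.neighborFinset v ∩ (S i ∪ Qseq G τ S i)).card

def IsTTS (G : SimpleGraph V) [Fintype V] (τ : V → ℕ) (S : ℕ → Finset V) (k : ℕ) : Prop :=
  S k = ∅ ∧ Qseq G τ S k = Finset.univ

def ttsSize (S : ℕ → Finset V) (k : ℕ) : ℕ := ∑ i ∈ Finset.range (k + 1), (S i).card

noncomputable def strictMaj (G : SimpleGraph V) [Fintype V] (v : V) : ℕ := (G.degree v + 2) / 2

noncomputable def npStep (G : SimpleGraph V) [Fintype V] (τ : V → ℕ) (A : Finset V) : Finset V :=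
  Finset.univ.filter fun v => τ v ≤ (G.neighborFinset v ∩ A).card

def IsTS (G : SimpleGraph V) [Fintype V] (τ : V → ℕ) (S : Finset V) : Prop :=
  ∃ i : ℕ, (npStep G τ)^[i] S = Finset.univ

noncomputable def MTT (G : SimpleGraph V) [Fintype V] (τ : V → ℕ) : ℕ :=
  sInf {m | ∃ (S : ℕ → Finset V) (k : ℕ), IsTTS G τ S k ∧ ttsSize S k = m}

/-- Lemma 2: Let `G` be bipartite with parts `X`, `Y`, `τ` a threshold
assignment, `S_0, …, S_k` a timed target set, `S_e = S_0 ∪ S_2 ∪ …`, `S_o = S_1 ∪ S_3 ∪ …`.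
If `D ⊆ V` satisfies `D ∩ S_e ∩ X = ∅` and `D ∩ S_o ∩ Y = ∅`, then the number of edges of
the induced subgraph `G[D]` is at most `Σ_{u∈D} (d(u) − τ(u))`. -/
theorem stmt3 [Fintype V] (G : SimpleGraph V) (X Y : Finset V)
    (hpart : ∀ v, v ∈ X ↔ v ∉ Y)
    (hbip : ∀ a b, G.Adj a b → (a ∈ X ↔ b ∈ Y))
    (τ : V → ℕ) (hτ : ∀ v, τ v ≤ G.degree v)
    (S : ℕ → Finset V) (k : ℕ) (hS : IsTTS G τ S k)
    (D : Finset V)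
    (hDX : D ∩ (((Finset.range (k + 1)).filter fun i => Even i).biUnion S) ∩ X = ∅)
    (hDY : D ∩ (((Finset.range (k + 1)).filter fun i => Odd i).biUnion S) ∩ Y = ∅) :
    (G.edgeFinset.filter fun e => ∀ x ∈ e, x ∈ D).card ≤ ∑ u ∈ D, (G.degree u - τ u) := by
  
  classical
  obtain ⟨hSk, hQk⟩ := hS
  -- Q_{k+1} = univ
  have hQk1 : Qseq G τ S (k + 1) = Finset.univ := by
    ext v
    rw [show k + 1 = Nat.succ k from rfl, Qseq.eq_2]
    simp only [Finset.mem_filter, Finset.mem_univ, true_and, iff_true]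
    rw [hSk, hQk, Finset.empty_union, Finset.inter_univ]
    exact hτ v
  -- existence of even/odd activation times
  have hEx : ∀ u : V, ∃ i, Even i ∧ u ∈ Qseq G τ S i := by
    intro u
    by_cases hk : Even k
    · exact ⟨k, hk, by simp [hQk]⟩
    · exact ⟨k + 1, Nat.even_add_one.mpr hk, by simp [hQk1]⟩
  have hOx : ∀ u : V, ∃ i, Odd i ∧ u ∈ Qseq G τ S i := by
    intro u
    by_cases hk : Odd k
    · exact ⟨k, hk, by simp [hQk]⟩
    · refine ⟨k + 1, ?_, by simp [hQk1]⟩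
      rcases Nat.even_or_odd k with h | h
      · exact Even.add_one h
      · exact absurd h hk
  set a : V → ℕ := fun u => Nat.find (hEx u) with ha_def
  set b : V → ℕ := fun u => Nat.find (hOx u) with hb_def
  have haspec : ∀ u, Even (a u) ∧ u ∈ Qseq G τ S (a u) := fun u => Nat.find_spec (hEx u)
  have hbspec : ∀ u, Odd (b u) ∧ u ∈ Qseq G τ S (b u) := fun u => Nat.find_spec (hOx u)
  have hamin : ∀ u i, Even i → u ∈ Qseq G τ S i → a u ≤ i := fun u i h1 h2 =>
    Nat.find_le ⟨h1, h2⟩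
  have hbmin : ∀ u i, Odd i → u ∈ Qseq G τ S i → b u ≤ i := fun u i h1 h2 =>
    Nat.find_le ⟨h1, h2⟩
  set t : V → ℕ := fun u => if u ∈ X then a u else b u with ht_def
  have hapos : ∀ u, 1 ≤ a u := by
    intro u
    by_contra h
    have h0 : a u = 0 := by omega
    have := (haspec u).2
    rw [h0, Qseq.eq_1] at this
    exact absurd this (Finset.notMem_empty u)
  have hbpos : ∀ u, 1 ≤ b u := by
    intro u
    by_contra h
    have h0 : b u = 0 := by omega
    have := (hbspec u).2
    rw [h0, Qseq.eq_1] at this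
    exact absurd this (Finset.notMem_empty u)
  have htpos : ∀ u, 1 ≤ t u := by
    intro u; by_cases h : u ∈ X <;> simp only [ht_def, h, if_true, if_false] <;>
      [exact hapos u; exact hbpos u]
  have htmem : ∀ u, u ∈ Qseq G τ S (t u) := by
    intro u; by_cases h : u ∈ X <;> simp only [ht_def, h, if_true, if_false] <;>
      [exact (haspec u).2; exact (hbspec u).2]
  have hale : ∀ u, a u ≤ k + 1 := by
    intro u
    by_cases hk : Even k
    · exact le_trans (hamin u k hk (by simp [hQk])) (Nat.le_succ k)
    · exact hamin u (k + 1) (Nat.even_add_one.mpr hk) (by simp [hQk1])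
  have hble : ∀ u, b u ≤ k + 1 := by
    intro u
    by_cases hk : Odd k
    · exact le_trans (hbmin u k hk (by simp [hQk])) (Nat.le_succ k)
    · refine hbmin u (k + 1) ?_ (by simp [hQk1])
      rcases Nat.even_or_odd k with h | h
      · exact Even.add_one h
      · exact absurd h hk
  -- threshold bound at time t u
  have hthr : ∀ u : V,
      τ u ≤ (G.neighborFinset u ∩ (S (t u - 1) ∪ Qseq G τ S (t u - 1))).card := by
    intro u
    obtain ⟨m, hm⟩ : ∃ m, t u = m + 1 := ⟨t u - 1, by have := htpos u; omega⟩
    have h1 := htmem u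
    rw [hm, show m + 1 = Nat.succ m from rfl, Qseq.eq_2, Finset.mem_filter] at h1
    rw [hm]
    simpa using h1.2
  -- the charged set
  set C : V → Finset V := fun u =>
    (G.neighborFinset u ∩ D).filter
      (fun v => v ∉ S (t u - 1) ∪ Qseq G τ S (t u - 1)) with hC_def
  have hCcard : ∀ u : V, (C u).card ≤ G.degree u - τ u := by
    intro u
    have hsub : C u ⊆ G.neighborFinset u \ (S (t u - 1) ∪ Qseq G τ S (t u - 1)) := by
      intro v hv
      simp only [hC_def, Finset.mem_filter, Finset.mem_inter] at hv
      simp only [Finset.mem_sdiff]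
      exact ⟨hv.1.1, hv.2⟩
    have h1 : (C u).card ≤
        (G.neighborFinset u \ (S (t u - 1) ∪ Qseq G τ S (t u - 1))).card :=
      Finset.card_le_card hsub
    have h2 := Finset.card_sdiff_add_card_inter (G.neighborFinset u)
      (S (t u - 1) ∪ Qseq G τ S (t u - 1))
    have h3 := hthr u
    have h4 : (G.neighborFinset u).card = G.degree u := G.card_neighborFinset_eq_degree u
    omega
  -- hypothesis unpacking
  have hDX' : ∀ v ∈ D, v ∈ X → ∀ i, i ≤ k → Even i → v ∉ S i := by
    intro v hvD hvX i hik hev hvS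
    have hmem : v ∈ D ∩ (((Finset.range (k + 1)).filter fun i => Even i).biUnion S) ∩ X := by
      simp only [Finset.mem_inter, Finset.mem_biUnion, Finset.mem_filter, Finset.mem_range]
      exact ⟨⟨hvD, ⟨i, ⟨by omega, hev⟩, hvS⟩⟩, hvX⟩
    rw [hDX] at hmem
    exact absurd hmem (Finset.notMem_empty v)
  have hDY' : ∀ v ∈ D, v ∈ Y → ∀ i, i ≤ k → Odd i → v ∉ S i := by
    intro v hvD hvY i hik hod hvS
    have hmem : v ∈ D ∩ (((Finset.range (k + 1)).filter fun i => Odd i).biUnion S) ∩ Y := by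
      simp only [Finset.mem_inter, Finset.mem_biUnion, Finset.mem_filter, Finset.mem_range]
      exact ⟨⟨hvD, ⟨i, ⟨by omega, hod⟩, hvS⟩⟩, hvY⟩
    rw [hDY] at hmem
    exact absurd hmem (Finset.notMem_empty v)
  -- key claim: every edge of G[D] is charged
  have hkey : ∀ u v : V, G.Adj u v → u ∈ D → v ∈ D → u ∈ X → v ∈ Y →
      v ∈ C u ∨ u ∈ C v := by
    intro u v hadj huD hvD huX hvY
    by_contra hcon
    push_neg at hcon
    obtain ⟨h1, h2⟩ := hcon
    have hvX : v ∉ X := fun h => (hpart v).mp h hvY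
    have huY : u ∉ Y := (hpart u).mp huX
    have htu : t u = a u := by simp [ht_def, huX]
    have htv : t v = b v := by simp [ht_def, hvX]
    -- v is in S(a u - 1) ∪ Q(a u - 1)
    have hv1 : v ∈ S (t u - 1) ∪ Qseq G τ S (t u - 1) := by
      by_contra h
      exact h1 (by
        simp only [hC_def, Finset.mem_filter, Finset.mem_inter,
          SimpleGraph.mem_neighborFinset]
        exact ⟨⟨hadj, hvD⟩, h⟩)
    have hu1 : u ∈ S (t v - 1) ∪ Qseq G τ S (t v - 1) := by
      by_contra h
      exact h2 (by
        simp only [hC_def, Finset.mem_filter, Finset.mem_inter,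
          SimpleGraph.mem_neighborFinset]
        exact ⟨⟨hadj.symm, huD⟩, h⟩)
    have haeven : Even (a u) := (haspec u).1
    have hbodd : Odd (b v) := (hbspec v).1
    have hodd_au : Odd (a u - 1) := by
      have := hapos u
      rcases haeven with ⟨m, hm⟩
      refine ⟨m - 1, by omega⟩
    have hev_bv : Even (b v - 1) := by
      have := hbpos v
      rcases hbodd with ⟨m, hm⟩
      exact ⟨m, by omega⟩
    -- v ∉ S (a u - 1) by parity, so v ∈ Q (a u - 1)
    have hvQ : v ∈ Qseq G τ S (a u - 1) := by
      rw [htu] at hv1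
      rcases Finset.mem_union.mp hv1 with h | h
      · exact absurd h (hDY' v hvD hvY (a u - 1) (by have := hale u; omega) hodd_au)
      · exact h
    have huQ : u ∈ Qseq G τ S (b v - 1) := by
      rw [htv] at hu1
      rcases Finset.mem_union.mp hu1 with h | h
      · exact absurd h (hDX' u huD huX (b v - 1) (by have := hble v; omega) hev_bv)
      · exact h
    have hb_le : b v ≤ a u - 1 := hbmin v (a u - 1) hodd_au hvQ
    have ha_le : a u ≤ b v - 1 := hamin u (b v - 1) hev_bv huQ
    have := hapos u
    have := hbpos v
    omega
  -- coverage
  have hcover : (G.edgeFinset.filter fun e => ∀ x ∈ e, x ∈ D) ⊆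
      D.biUnion (fun u => (C u).image fun v => s(u, v)) := by
    intro e he
    simp only [Finset.mem_filter, SimpleGraph.mem_edgeFinset] at he
    obtain ⟨he1, he2⟩ := he
    revert he1 he2
    refine Sym2.ind (fun u v => ?_) e
    intro he1 he2
    have hadj : G.Adj u v := he1
    have huD : u ∈ D := he2 u (Sym2.mem_mk_left u v)
    have hvD : v ∈ D := he2 v (Sym2.mem_mk_right u v)
    have hcharged : v ∈ C u ∨ u ∈ C v := by
      by_cases huX : u ∈ X
      · have hvY : v ∈ Y := (hbip u v hadj).mp huX
        exact hkey u v hadj huD hvD huX hvY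
      · have huY : u ∈ Y := by
          by_contra h; exact huX ((hpart u).mpr h)
        have hvX : v ∈ X := (hbip v u hadj.symm).mpr huY
        have hvY' : u ∈ Y := huY
        exact (hkey v u hadj.symm hvD huD hvX huY).symm
    simp only [Finset.mem_biUnion, Finset.mem_image]
    rcases hcharged with h | h
    · exact ⟨u, huD, v, h, rfl⟩
    · exact ⟨v, hvD, u, h, Sym2.eq_swap⟩
  calc (G.edgeFinset.filter fun e => ∀ x ∈ e, x ∈ D).card
      ≤ (D.biUnion (fun u => (C u).image fun v => s(u, v))).card :=
        Finset.card_le_card hcover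
    _ ≤ ∑ u ∈ D, ((C u).image fun v => s(u, v)).card := Finset.card_biUnion_le
    _ ≤ ∑ u ∈ D, (C u).card := Finset.sum_le_sum fun u _ => Finset.card_image_le
    _ ≤ ∑ u ∈ D, (G.degree u - τ u) := Finset.sum_le_sum fun u _ => hCcard u
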